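/- arXiv:2509.20083 — 3 statements merged into one kernel-verified Lean document; each statement's English description precedes it below -/
import Mathlib

section
/- Under the partially linear logistic model with 0 < P(X=1|Z) < 1 almost surely, β = 0 if and only if E[Cov(Y, X | Z)] = 0. -/
open MeasureTheory ProbabilityTheory

noncomputable def expit (t : ℝ) : ℝ := 1 / (1 + Real.exp (-t))

lemma expit_pos (t : ℝ) : 0 < expit t := by
  unfold expit; positivity

lemma expit_lt_one (t : ℝ) : expit t < 1 := by
  unfold expit
  rw [div_lt_one (by positivity)]
  linarith [Real.exp_pos (-t)]

lemma expit_strictMono : StrictMono expit := by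
  intro s t hst
  unfold expit
  apply one_div_lt_one_div_of_lt (by positivity)
  have := Real.exp_lt_exp.mpr (neg_lt_neg hst)
  linarith

lemma measurable_expit : Measurable expit := by
  unfold expit; fun_prop

lemma integrable_of_bdd {Ω : Type*} {mΩ : MeasurableSpace Ω} {μ : Measure Ω}
    [IsProbabilityMeasure μ] {f : Ω → ℝ} (hf : AEStronglyMeasurable f μ)
    {C : ℝ} (h : ∀ᵐ ω ∂μ, |f ω| ≤ C) : Integrable f μ := by
  refine Integrable.mono' (integrable_const C) hf ?_
  simpa [Real.norm_eq_abs] using h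

/-- Under the partially linear logistic model
P(Y=1|X,Z) = expit(Xβ + g(Z)) with 0 < P(X=1|Z) < 1 a.s.,
β = 0 ↔ E[Cov(Y, X | Z)] = 0. -/
theorem stmt3
    {Ω : Type*} {mΩ : MeasurableSpace Ω} {μ : Measure Ω} [IsProbabilityMeasure μ]
    {d : ℕ} (Z : Ω → (Fin d → ℝ)) (hZ : Measurable Z)
    (Y X : Ω → ℝ) (hYmeas : Measurable Y) (hXmeas : Measurable X)
    (hY01 : ∀ ω, Y ω = 0 ∨ Y ω = 1) (hX01 : ∀ ω, X ω = 0 ∨ X ω = 1)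
    (g : (Fin d → ℝ) → ℝ) (hg : Measurable g) (β : ℝ)
    (hmodel : μ[Y | MeasurableSpace.comap (fun ω => (X ω, Z ω)) inferInstance]
      =ᵐ[μ] fun ω => expit (X ω * β + g (Z ω)))
    (hpos : ∀ᵐ ω ∂μ, 0 < (μ[X | MeasurableSpace.comap Z inferInstance]) ω
      ∧ (μ[X | MeasurableSpace.comap Z inferInstance]) ω < 1) :
    β = 0 ↔
      ∫ ω, ((μ[fun ω' => Y ω' * X ω' | MeasurableSpace.comap Z inferInstance]) ω
        - (μ[Y | MeasurableSpace.comap Z inferInstance]) ω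
          * (μ[X | MeasurableSpace.comap Z inferInstance]) ω) ∂μ = 0 := by
  set m : MeasurableSpace Ω := MeasurableSpace.comap Z inferInstance with hm_def
  set m2 : MeasurableSpace Ω := MeasurableSpace.comap (fun ω => (X ω, Z ω)) inferInstance
    with hm2_def
  have hm : m ≤ mΩ := hZ.comap_le
  have hpair : Measurable[mΩ] (fun ω => (X ω, Z ω)) := hXmeas.prodMk hZ
  have hm2 : m2 ≤ mΩ := hpair.comap_le
  have hmm2 : m ≤ m2 := by
    rw [hm_def, hm2_def]
    have hZeq : Z = Prod.snd ∘ (fun ω => (X ω, Z ω)) := rfl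
    rw [hZeq, ← MeasurableSpace.comap_comp]
    exact MeasurableSpace.comap_mono measurable_snd.comap_le
  have hZm : Measurable[m] Z := Measurable.of_comap_le le_rfl
  set q : Ω → ℝ := fun ω => expit (β + g (Z ω)) with hq_def
  set r : Ω → ℝ := fun ω => expit (g (Z ω)) with hr_def
  have hqm : Measurable[m] q := measurable_expit.comp ((hg.comp hZm).const_add β)
  have hrm : Measurable[m] r := measurable_expit.comp (hg.comp hZm)
  have hXm2 : Measurable[m2] X := by
    have hpm2 : Measurable[m2] (fun ω => (X ω, Z ω)) := Measurable.of_comap_le le_rfl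
    exact measurable_fst.comp hpm2
  set p : Ω → ℝ := μ[X|m] with hp_def
  have hsp : StronglyMeasurable[mΩ] p := stronglyMeasurable_condExp.mono hm
  -- bounds
  have hq01 : ∀ ω, 0 < q ω ∧ q ω < 1 := fun ω => ⟨expit_pos _, expit_lt_one _⟩
  have hr01 : ∀ ω, 0 < r ω ∧ r ω < 1 := fun ω => ⟨expit_pos _, expit_lt_one _⟩
  -- integrability
  have hYi : Integrable Y μ := integrable_of_bdd (C := 1) hYmeas.aestronglyMeasurable
    (ae_of_all _ fun ω => by rcases hY01 ω with h | h <;> simp [h])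
  have hXi : Integrable X μ := integrable_of_bdd (C := 1) hXmeas.aestronglyMeasurable
    (ae_of_all _ fun ω => by rcases hX01 ω with h | h <;> simp [h])
  have hXYi : Integrable (X * Y) μ := integrable_of_bdd (C := 1) (hXmeas.mul hYmeas).aestronglyMeasurable
    (ae_of_all _ fun ω => by
      rcases hX01 ω with h | h <;> rcases hY01 ω with h' | h' <;>
        simp [Pi.mul_apply, h, h'])
  have hqM : Measurable[mΩ] q := hqm.mono hm le_rfl
  have hrM : Measurable[mΩ] r := hrm.mono hm le_rfl
  have hqXi : Integrable (fun ω => q ω * X ω) μ :=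
    integrable_of_bdd (C := 1) (hqM.mul hXmeas).aestronglyMeasurable
      (ae_of_all _ fun ω => by
        rcases hX01 ω with h | h <;> simp [h, abs_of_pos (hq01 ω).1, le_of_lt (hq01 ω).2])
  have hrXi : Integrable (fun ω => r ω * X ω) μ :=
    integrable_of_bdd (C := 1) (hrM.mul hXmeas).aestronglyMeasurable
      (ae_of_all _ fun ω => by
        rcases hX01 ω with h | h <;> simp [h, abs_of_pos (hr01 ω).1, le_of_lt (hr01 ω).2])
  have hri : Integrable r μ := integrable_of_bdd (C := 1) hrM.aestronglyMeasurable
    (ae_of_all _ fun ω => by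
      rw [abs_of_pos (hr01 ω).1]; exact le_of_lt (hr01 ω).2)
  -- step 2: E[YX | m2]
  have step2 : μ[(fun ω' => Y ω' * X ω')|m2] =ᵐ[μ] (fun ω => q ω * X ω) := by
    calc μ[(fun ω' => Y ω' * X ω')|m2]
        =ᵐ[μ] μ[X * Y|m2] := condExp_congr_ae (ae_of_all _ fun ω => mul_comm _ _)
      _ =ᵐ[μ] X * μ[Y|m2] :=
          condExp_mul_of_stronglyMeasurable_left hXm2.stronglyMeasurable hXYi hYi
      _ =ᵐ[μ] fun ω => q ω * X ω := by
          filter_upwards [hmodel] with ω hω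
          simp only [Pi.mul_apply, hω]
          rcases hX01 ω with h | h <;> simp [h, hq_def]
  -- step 3: E[YX | m]
  have step3 : μ[(fun ω' => Y ω' * X ω')|m] =ᵐ[μ] fun ω => q ω * p ω := by
    calc μ[(fun ω' => Y ω' * X ω')|m]
        =ᵐ[μ] μ[μ[(fun ω' => Y ω' * X ω')|m2]|m] := (condExp_condExp_of_le hmm2 hm2).symm
      _ =ᵐ[μ] μ[(fun ω => q ω * X ω)|m] := condExp_congr_ae step2
      _ =ᵐ[μ] q * μ[X|m] :=
          condExp_mul_of_stronglyMeasurable_left hqm.stronglyMeasurable hqXi hXi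
      _ =ᵐ[μ] fun ω => q ω * p ω := ae_of_all _ fun ω => rfl
  -- decomposition of the model function
  have hfdecomp : (fun ω => expit (X ω * β + g (Z ω)))
      =ᵐ[μ] (fun ω => q ω * X ω) + r - (fun ω => r ω * X ω) := ae_of_all _ fun ω => by
    rcases hX01 ω with h | h <;>
      simp [Pi.add_apply, Pi.sub_apply, h, hq_def, hr_def]
  -- step 4: E[Y | m]
  have step4 : μ[Y|m] =ᵐ[μ] fun ω => q ω * p ω + r ω - r ω * p ω := by
    have hqmul : μ[(fun ω => q ω * X ω)|m] =ᵐ[μ] q * μ[X|m] :=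
      condExp_mul_of_stronglyMeasurable_left hqm.stronglyMeasurable hqXi hXi
    have hrmul : μ[(fun ω => r ω * X ω)|m] =ᵐ[μ] r * μ[X|m] :=
      condExp_mul_of_stronglyMeasurable_left hrm.stronglyMeasurable hrXi hXi
    have hrcond : μ[r|m] = r :=
      condExp_of_stronglyMeasurable hm hrm.stronglyMeasurable hri
    calc μ[Y|m]
        =ᵐ[μ] μ[μ[Y|m2]|m] := (condExp_condExp_of_le hmm2 hm2).symm
      _ =ᵐ[μ] μ[(fun ω => expit (X ω * β + g (Z ω)))|m] := condExp_congr_ae hmodel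
      _ =ᵐ[μ] μ[(fun ω => q ω * X ω) + r - (fun ω => r ω * X ω)|m] :=
          condExp_congr_ae hfdecomp
      _ =ᵐ[μ] μ[(fun ω => q ω * X ω) + r|m] - μ[(fun ω => r ω * X ω)|m] :=
          condExp_sub (hqXi.add hri) hrXi m
      _ =ᵐ[μ] (μ[(fun ω => q ω * X ω)|m] + μ[r|m]) - μ[(fun ω => r ω * X ω)|m] :=
          (condExp_add hqXi hri m).sub Filter.EventuallyEq.rfl
      _ =ᵐ[μ] fun ω => q ω * p ω + r ω - r ω * p ω := by
          filter_upwards [hqmul, hrmul] with ω h1 h2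
          simp only [Pi.sub_apply, Pi.add_apply, Pi.mul_apply, h1, h2, hrcond]; rfl
  -- rewrite the integrand
  have hfinal : (fun ω => (μ[(fun ω' => Y ω' * X ω')|m]) ω - (μ[Y|m]) ω * p ω)
      =ᵐ[μ] fun ω => p ω * (1 - p ω) * (q ω - r ω) := by
    filter_upwards [step3, step4] with ω h3 h4
    rw [h3, h4]; ring
  rw [integral_congr_ae hfinal]
  constructor
  · rintro rfl
    have hqr : (fun ω => p ω * (1 - p ω) * (q ω - r ω)) =ᵐ[μ] 0 := ae_of_all _ fun ω => by
      simp [hq_def, hr_def]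
    rw [integral_congr_ae hqr]
    simp
  · intro hI
    by_contra hβ
    have hIntH : Integrable (fun ω => p ω * (1 - p ω) * (q ω - r ω)) μ := by
      refine integrable_of_bdd (C := 1)
        (((hsp.mul (stronglyMeasurable_const.sub hsp)).mul
          ((hqM.stronglyMeasurable.sub hrM.stronglyMeasurable))).aestronglyMeasurable) ?_
      filter_upwards [hpos] with ω hω
      obtain ⟨h1, h2⟩ := hω
      have hq := hq01 ω; have hr := hr01 ω
      have hpp : 0 < p ω * (1 - p ω) := mul_pos h1 (by linarith)
      have hpp1 : p ω * (1 - p ω) ≤ 1 := by nlinarith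
      have hd1 : q ω - r ω ≤ 1 := by linarith [hq.2, hr.1]
      have hd2 : -1 ≤ q ω - r ω := by linarith [hq.1, hr.2]
      rw [abs_le]
      constructor <;> nlinarith
    rcases lt_or_gt_of_ne hβ with hneg | hposβ
    · have hlt : ∀ᵐ ω ∂μ, p ω * (1 - p ω) * (q ω - r ω) < 0 := by
        filter_upwards [hpos] with ω hω
        obtain ⟨h1, h2⟩ := hω
        have hqr : q ω < r ω := expit_strictMono (by linarith : β + g (Z ω) < g (Z ω))
        have hpp : 0 < p ω * (1 - p ω) := mul_pos h1 (by linarith)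
        nlinarith
      have hae : (fun ω => -(p ω * (1 - p ω) * (q ω - r ω))) =ᵐ[μ] 0 := by
        refine (integral_eq_zero_iff_of_nonneg_ae ?_ hIntH.neg).mp ?_
        · filter_upwards [hlt] with ω hω
          simpa using le_of_lt (neg_pos.mpr hω)
        · have : ∫ ω, -(p ω * (1 - p ω) * (q ω - r ω)) ∂μ = 0 := by
            rw [integral_neg, hI, neg_zero]
          simpa using this
      obtain ⟨ω, h1, h2⟩ := (hae.and hlt).exists
      simp only [Pi.zero_apply] at h1
      linarith
    · have hlt : ∀ᵐ ω ∂μ, 0 < p ω * (1 - p ω) * (q ω - r ω) := by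
        filter_upwards [hpos] with ω hω
        obtain ⟨h1, h2⟩ := hω
        have hqr : r ω < q ω := expit_strictMono (by linarith : g (Z ω) < β + g (Z ω))
        have hpp : 0 < p ω * (1 - p ω) := mul_pos h1 (by linarith)
        nlinarith
      have hae : (fun ω => p ω * (1 - p ω) * (q ω - r ω)) =ᵐ[μ] 0 := by
        refine (integral_eq_zero_iff_of_nonneg_ae ?_ hIntH).mp hI
        filter_upwards [hlt] with ω hω
        simpa using le_of_lt hω
      obtain ⟨ω, h1, h2⟩ := (hae.and hlt).exists
      simp only [Pi.zero_apply] at h1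
      linarith
end

section
/- Under the partially linear logistic model with 0 < P(X=1|Z) < 1 almost surely, sign(β) = sign(E[Cov(Y, X | Z)]); in particular β > 0 if and only if E[Cov(Y, X | Z)] > 0, and β < 0 if and only if E[Cov(Y, X | Z)] < 0. -/
open MeasureTheory ProbabilityTheory

lemma expit_denom_pos (t : ℝ) : 0 < 1 + Real.exp (-t) := by positivity

lemma continuous_expit : Continuous expit :=
  continuous_const.div (continuous_const.add (Real.continuous_exp.comp continuous_neg))
    (fun t => (expit_denom_pos t).ne')

lemma integrable_of_ae_bdd {Ω : Type*} {mΩ : MeasurableSpace Ω} {μ : Measure Ω}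
    [IsFiniteMeasure μ] {f : Ω → ℝ} (hf : AEStronglyMeasurable f μ) {C : ℝ}
    (h : ∀ᵐ ω ∂μ, |f ω| ≤ C) : Integrable f μ :=
  ⟨hf, HasFiniteIntegral.of_bounded (C := C) (h.mono fun ω hω => by
    simpa [Real.norm_eq_abs] using hω)⟩

lemma integral_pos_of_ae_pos {Ω : Type*} {mΩ : MeasurableSpace Ω} {μ : Measure Ω}
    [IsProbabilityMeasure μ] {f : Ω → ℝ} (hf : Integrable f μ)
    (h : ∀ᵐ ω ∂μ, 0 < f ω) : 0 < ∫ ω, f ω ∂μ := by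
  rw [integral_pos_iff_support_of_nonneg_ae (h.mono fun ω hω => hω.le) hf]
  have hsub : ∀ᵐ ω ∂μ, ω ∈ Function.support f := h.mono fun ω hω => ne_of_gt hω
  have h0 : μ {ω | ω ∉ Function.support f} = 0 := ae_iff.mp hsub
  calc (0 : ENNReal) < 1 := by norm_num
    _ = μ Set.univ := measure_univ.symm
    _ ≤ μ (Function.support f ∪ {ω | ω ∉ Function.support f}) := by
        apply measure_mono
        intro ω _
        by_cases hω : ω ∈ Function.support f
        · exact Or.inl hω
        · exact Or.inr hω
    _ ≤ μ (Function.support f) + μ {ω | ω ∉ Function.support f} := measure_union_le _ _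
    _ = μ (Function.support f) := by rw [h0, add_zero]

/-- Under the partially linear logistic model
P(Y=1|X,Z) = expit(Xβ + g(Z)) with 0 < P(X=1|Z) < 1 a.s.,
sign(β) = sign(E[Cov(Y,X|Z)]). -/
theorem stmt4
    {Ω : Type*} {mΩ : MeasurableSpace Ω} {μ : Measure Ω} [IsProbabilityMeasure μ]
    {d : ℕ} (Z : Ω → (Fin d → ℝ)) (hZ : Measurable Z)
    (Y X : Ω → ℝ) (hYmeas : Measurable Y) (hXmeas : Measurable X)
    (hY01 : ∀ ω, Y ω = 0 ∨ Y ω = 1) (hX01 : ∀ ω, X ω = 0 ∨ X ω = 1)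
    (g : (Fin d → ℝ) → ℝ) (hg : Measurable g) (β : ℝ)
    (hmodel : μ[Y | MeasurableSpace.comap (fun ω => (X ω, Z ω)) inferInstance]
      =ᵐ[μ] fun ω => expit (X ω * β + g (Z ω)))
    (hpos : ∀ᵐ ω ∂μ, 0 < (μ[X | MeasurableSpace.comap Z inferInstance]) ω
      ∧ (μ[X | MeasurableSpace.comap Z inferInstance]) ω < 1) :
    (0 < β ↔
      0 < ∫ ω, ((μ[fun ω' => Y ω' * X ω' | MeasurableSpace.comap Z inferInstance]) ω
        - (μ[Y | MeasurableSpace.comap Z inferInstance]) ω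
          * (μ[X | MeasurableSpace.comap Z inferInstance]) ω) ∂μ)
    ∧ (β < 0 ↔
      ∫ ω, ((μ[fun ω' => Y ω' * X ω' | MeasurableSpace.comap Z inferInstance]) ω
        - (μ[Y | MeasurableSpace.comap Z inferInstance]) ω
          * (μ[X | MeasurableSpace.comap Z inferInstance]) ω) ∂μ < 0) := by
  set m : MeasurableSpace Ω := MeasurableSpace.comap Z inferInstance with hmdef
  set m2 : MeasurableSpace Ω := MeasurableSpace.comap (fun ω => (X ω, Z ω)) inferInstance
    with hm2def
  have hm : m ≤ mΩ := hZ.comap_le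
  have hm2 : m2 ≤ mΩ := (hXmeas.prodMk hZ).comap_le
  have hm12 : m ≤ m2 := by
    have h1 : m = MeasurableSpace.comap (fun ω => (X ω, Z ω)) (MeasurableSpace.comap Prod.snd inferInstance) :=
      (MeasurableSpace.comap_comp (f := Prod.snd) (g := fun ω => (X ω, Z ω))).symm
    rw [h1, hm2def]
    exact MeasurableSpace.comap_mono measurable_snd.comap_le
  haveI : SigmaFinite (μ.trim hm2) := by
    have : IsFiniteMeasure (μ.trim hm2) := isFiniteMeasure_trim hm2
    infer_instance
  have hZm : Measurable[m] Z := Measurable.of_comap_le le_rfl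
  have hFm2 : Measurable[m2] (fun ω => (X ω, Z ω)) := Measurable.of_comap_le le_rfl
  have hXm2 : Measurable[m2] X := measurable_fst.comp hFm2
  set p : Ω → ℝ := μ[X | m] with hpdef
  set h₁ : Ω → ℝ := fun ω => expit (β + g (Z ω)) with hh₁def
  set h₀ : Ω → ℝ := fun ω => expit (g (Z ω)) with hh₀def
  set q : Ω → ℝ := fun ω => h₁ ω - h₀ ω with hqdef
  have hh₁m : StronglyMeasurable[m] h₁ :=
    (measurable_expit.comp ((measurable_const.add hg).comp hZm)).stronglyMeasurable
  have hh₀m : StronglyMeasurable[m] h₀ :=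
    (measurable_expit.comp (hg.comp hZm)).stronglyMeasurable
  have hqm : StronglyMeasurable[m] q := hh₁m.sub hh₀m
  have hX01' : ∀ ω, 0 ≤ X ω ∧ X ω ≤ 1 := fun ω => by
    rcases hX01 ω with h | h <;> simp [h]
  have hY01' : ∀ ω, 0 ≤ Y ω ∧ Y ω ≤ 1 := fun ω => by
    rcases hY01 ω with h | h <;> simp [h]
  have habs01 : ∀ x : ℝ, 0 ≤ x → x ≤ 1 → |x| ≤ 1 := fun x h1 h2 => abs_le.mpr ⟨by linarith, h2⟩
  have hh₁bd : ∀ ω, |h₁ ω| ≤ 1 := fun ω =>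
    habs01 _ (expit_pos _).le (expit_lt_one _).le
  have hh₀bd : ∀ ω, |h₀ ω| ≤ 1 := fun ω =>
    habs01 _ (expit_pos _).le (expit_lt_one _).le
  have intX : Integrable X μ := integrable_of_ae_bdd hXmeas.aestronglyMeasurable (C := 1)
    (Filter.Eventually.of_forall fun ω => habs01 _ (hX01' ω).1 (hX01' ω).2)
  have intY : Integrable Y μ := integrable_of_ae_bdd hYmeas.aestronglyMeasurable (C := 1)
    (Filter.Eventually.of_forall fun ω => habs01 _ (hY01' ω).1 (hY01' ω).2)
  have inth₀ : Integrable h₀ μ := integrable_of_ae_bdd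
    ((hh₀m.mono hm).aestronglyMeasurable) (C := 1) (Filter.Eventually.of_forall hh₀bd)
  have intqX : Integrable (q * X) μ := integrable_of_ae_bdd
    (((hqm.mono hm).mul hXmeas.stronglyMeasurable).aestronglyMeasurable) (C := 2)
    (Filter.Eventually.of_forall fun ω => by
      have := hh₁bd ω; have := hh₀bd ω
      have h1 := habs01 _ (hX01' ω).1 (hX01' ω).2
      calc |(q * X) ω| = |q ω| * |X ω| := abs_mul _ _
        _ ≤ 2 * 1 := by
            apply mul_le_mul _ h1 (abs_nonneg _) (by norm_num)
            calc |q ω| = |h₁ ω - h₀ ω| := by rw [hqdef]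
              _ ≤ |h₁ ω| + |h₀ ω| := abs_sub _ _
              _ ≤ 2 := by linarith
        _ = 2 := by norm_num)
  have inth₁X : Integrable (h₁ * X) μ := integrable_of_ae_bdd
    (((hh₁m.mono hm).mul hXmeas.stronglyMeasurable).aestronglyMeasurable) (C := 1)
    (Filter.Eventually.of_forall fun ω => by
      have h1 := habs01 _ (hX01' ω).1 (hX01' ω).2
      calc |(h₁ * X) ω| = |h₁ ω| * |X ω| := abs_mul _ _
        _ ≤ 1 * 1 := mul_le_mul (hh₁bd ω) h1 (abs_nonneg _) (by norm_num)
        _ = 1 := by norm_num)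
  have intXY : Integrable (X * Y) μ := integrable_of_ae_bdd
    ((hXmeas.mul hYmeas).aestronglyMeasurable) (C := 1)
    (Filter.Eventually.of_forall fun ω => by
      have h1 := habs01 _ (hX01' ω).1 (hX01' ω).2
      have h2 := habs01 _ (hY01' ω).1 (hY01' ω).2
      calc |(X * Y) ω| = |X ω| * |Y ω| := abs_mul _ _
        _ ≤ 1 * 1 := mul_le_mul h1 h2 (abs_nonneg _) (by norm_num)
        _ = 1 := by norm_num)
  -- pointwise identity
  have key : ∀ ω, expit (X ω * β + g (Z ω)) = (h₀ + q * X) ω := by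
    intro ω
    rcases hX01 ω with h | h <;>
      simp [h, hh₀def, hh₁def, hqdef]
  -- E[Y|Z]
  have hYm : μ[Y | m] =ᵐ[μ] fun ω => h₀ ω + q ω * p ω := by
    have t1 : μ[Y | m] =ᵐ[μ] μ[μ[Y | m2] | m] := (condExp_condExp_of_le hm12 hm2).symm
    have t2 : μ[μ[Y | m2] | m] =ᵐ[μ] μ[h₀ + q * X | m] :=
      condExp_congr_ae (hmodel.trans (Filter.Eventually.of_forall key))
    have t3 : μ[h₀ + q * X | m] =ᵐ[μ] μ[h₀ | m] + μ[q * X | m] := condExp_add inth₀ intqX m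
    have t4 : μ[h₀ | m] = h₀ := condExp_of_stronglyMeasurable hm hh₀m inth₀
    have t5 : μ[q * X | m] =ᵐ[μ] q * μ[X | m] := condExp_mul_of_stronglyMeasurable_left hqm intqX intX
    refine ((t1.trans t2).trans t3).trans ?_
    rw [t4]
    filter_upwards [t5] with ω hω
    simp only [Pi.add_apply, hω, Pi.mul_apply, hpdef]
  -- E[YX|Z]
  have hYXm2 : μ[(fun ω => Y ω * X ω) | m2] =ᵐ[μ] h₁ * X := by
    have e1 : (fun ω => Y ω * X ω) = X * Y := funext fun ω => mul_comm _ _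
    rw [e1]
    have t1 : μ[X * Y | m2] =ᵐ[μ] X * μ[Y | m2] :=
      condExp_mul_of_stronglyMeasurable_left hXm2.stronglyMeasurable intXY intY
    refine t1.trans ?_
    filter_upwards [hmodel] with ω hω
    simp only [Pi.mul_apply, hω]
    rcases hX01 ω with h | h <;> simp [h, hh₁def]
  have hYXm : μ[(fun ω => Y ω * X ω) | m] =ᵐ[μ] h₁ * p := by
    have t1 : μ[(fun ω => Y ω * X ω) | m] =ᵐ[μ] μ[μ[(fun ω => Y ω * X ω) | m2] | m] :=
      (condExp_condExp_of_le hm12 hm2).symm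
    have t2 : μ[μ[(fun ω => Y ω * X ω) | m2] | m] =ᵐ[μ] μ[h₁ * X | m] :=
      condExp_congr_ae hYXm2
    have t3 : μ[h₁ * X | m] =ᵐ[μ] h₁ * μ[X | m] :=
      condExp_mul_of_stronglyMeasurable_left hh₁m inth₁X intX
    exact (t1.trans t2).trans t3
  -- the covariance function
  set f : Ω → ℝ := fun ω => p ω * (1 - p ω) * q ω with hfdef
  have hint_eq : (fun ω => (μ[fun ω' => Y ω' * X ω' | m]) ω - (μ[Y | m]) ω * p ω)
      =ᵐ[μ] f := by
    filter_upwards [hYXm, hYm] with ω e1 e2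
    simp only [hfdef]
    rw [e1, e2]
    simp only [Pi.mul_apply]
    ring
  have hS : (∫ ω, ((μ[fun ω' => Y ω' * X ω' | m]) ω - (μ[Y | m]) ω * p ω) ∂μ)
      = ∫ ω, f ω ∂μ := integral_congr_ae hint_eq
  have hpsm : StronglyMeasurable[mΩ] p := stronglyMeasurable_condExp.mono hm
  have hf_int : Integrable f μ := by
    apply integrable_of_ae_bdd (C := 1)
    · exact ((hpsm.mul (stronglyMeasurable_const.sub hpsm)).mul (hqm.mono hm)).aestronglyMeasurable
    · filter_upwards [hpos] with ω hω
      have h1 : |p ω| ≤ 1 := habs01 _ hω.1.le hω.2.le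
      have h2 : |1 - p ω| ≤ 1 := habs01 _ (by linarith [hω.2]) (by linarith [hω.1])
      have h3 : |q ω| ≤ 1 := by
        rw [hqdef]
        have := expit_pos (β + g (Z ω)); have := expit_lt_one (β + g (Z ω))
        have := expit_pos (g (Z ω)); have := expit_lt_one (g (Z ω))
        rw [abs_le]; constructor <;> simp only [hh₁def, hh₀def] <;> linarith
      calc |f ω| = |p ω| * |1 - p ω| * |q ω| := by rw [hfdef]; simp [abs_mul]
        _ ≤ 1 * 1 * 1 := by
            apply mul_le_mul _ h3 (abs_nonneg _) (by norm_num)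
            exact mul_le_mul h1 h2 (abs_nonneg _) (by norm_num)
        _ = 1 := by norm_num
  -- sign analysis
  have hpos_case : 0 < β → 0 < ∫ ω, f ω ∂μ := by
    intro hβ
    apply integral_pos_of_ae_pos hf_int
    filter_upwards [hpos] with ω hω
    have hq : 0 < q ω := by
      rw [hqdef]
      simp only [hh₁def, hh₀def, sub_pos]
      exact expit_strictMono (by linarith)
    have := hω.1; have := hω.2
    rw [hfdef]
    have : 0 < p ω * (1 - p ω) := mul_pos hω.1 (by linarith)
    exact mul_pos this hq
  have hneg_case : β < 0 → ∫ ω, f ω ∂μ < 0 := by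
    intro hβ
    have h2 : 0 < ∫ ω, -f ω ∂μ := by
      apply integral_pos_of_ae_pos (f := fun ω => -f ω) hf_int.neg
      filter_upwards [hpos] with ω hω
      have hq : q ω < 0 := by
        rw [hqdef]
        simp only [hh₁def, hh₀def, sub_neg]
        exact expit_strictMono (by linarith)
      have hpq : 0 < p ω * (1 - p ω) := mul_pos hω.1 (by linarith [hω.2])
      simp only [hfdef]
      nlinarith
    rw [integral_neg] at h2
    linarith
  have hzero_case : β = 0 → ∫ ω, f ω ∂μ = 0 := by
    intro hβ
    have : f = fun _ => 0 := by
      funext ω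
      simp [hfdef, hqdef, hh₁def, hh₀def, hβ]
    rw [this]
    simp
  rw [hS]
  constructor
  · constructor
    · exact hpos_case
    · intro hSpos
      rcases lt_trichotomy β 0 with h | h | h
      · linarith [hneg_case h]
      · linarith [hzero_case h]
      · exact h
  · constructor
    · exact hneg_case
    · intro hSneg
      rcases lt_trichotomy β 0 with h | h | h
      · exact h
      · linarith [hzero_case h]
      · linarith [hpos_case h]
end

section
/- For any measurable functions ĥ, f̂ of Z, the bias decomposition E[(Y - ĥ(Z))(X - f̂(Z))] - E[Cov(Y, X | Z)] = E[(E[Y|Z] - ĥ(Z))(E[X|Z] - f̂(Z))] holds; in particular the bias is bounded by the product of the L2 errors: |bias| ≤ ‖E[Y|Z] - ĥ(Z)‖_2 · ‖E[X|Z] - f̂(Z)‖_2. -/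
open MeasureTheory ProbabilityTheory

section Aux

variable {Ω : Type*} {mΩ : MeasurableSpace Ω} {μ : Measure Ω}

private lemma int_mul' (p q : Ω → ℝ) (hp : MemLp p 2 μ) (hq : MemLp q 2 μ) :
    Integrable (fun ω => p ω * q ω) μ := by
  have h : MemLp (p • q) 1 μ := hq.smul hp
  rw [memLp_one_iff_integrable] at h
  exact h

private lemma memLp_condexp_two' [IsProbabilityMeasure μ] {mZ : MeasurableSpace Ω}
    (hmZ : mZ ≤ mΩ) {f : Ω → ℝ} (hf : MemLp f 2 μ) : MemLp (μ[f|mZ]) 2 μ := by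
  set F : Lp ℝ 2 μ := hf.toLp f with hF
  have h : (condExpL2 ℝ ℝ hmZ F : Ω → ℝ) =ᵐ[μ] μ[f|mZ] := by
    refine ae_eq_condExp_of_forall_setIntegral_eq hmZ (hf.integrable one_le_two) ?_ ?_ ?_
    · intro s _ hμs
      exact integrableOn_condExpL2_of_measure_ne_top hmZ hμs.ne F
    · intro s hs hμs
      rw [integral_condExpL2_eq hmZ F hs hμs.ne]
      exact integral_congr_ae (ae_restrict_of_ae hf.coeFn_toLp)
    · exact lpMeas.aestronglyMeasurable _
  have hmem : MemLp (condExpL2 ℝ ℝ hmZ F : Ω → ℝ) 2 μ := by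
    exact Lp.memLp _
  exact hmem.ae_eq h

private lemma ortho' [IsProbabilityMeasure μ] {mZ : MeasurableSpace Ω} (hmZ : mZ ≤ mΩ)
    {Y v : Ω → ℝ} (hY : MemLp Y 2 μ) (hvm : StronglyMeasurable[mZ] v) (hv : MemLp v 2 μ) :
    ∫ ω, Y ω * v ω ∂μ = ∫ ω, (μ[Y|mZ]) ω * v ω ∂μ := by
  have hint : Integrable (v * Y) μ := by
    have := int_mul' v Y hv hY
    exact this
  have h := condExp_mul_of_stronglyMeasurable_left (m := mZ) hvm hint (hY.integrable one_le_two)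
  calc ∫ ω, Y ω * v ω ∂μ
      = ∫ ω, (v * Y) ω ∂μ := by simp_rw [Pi.mul_apply, mul_comm]
    _ = ∫ ω, (μ[v * Y|mZ]) ω ∂μ := (integral_condExp hmZ).symm
    _ = ∫ ω, (v * μ[Y|mZ]) ω ∂μ := integral_congr_ae h
    _ = ∫ ω, (μ[Y|mZ]) ω * v ω ∂μ := by simp_rw [Pi.mul_apply, mul_comm]

private lemma ortho2' [IsProbabilityMeasure μ] {mZ : MeasurableSpace Ω} (hmZ : mZ ≤ mΩ)
    {Y v : Ω → ℝ} (hY : MemLp Y 2 μ) (hvm : StronglyMeasurable[mZ] v) (hv : MemLp v 2 μ) :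
    ∫ ω, v ω * Y ω ∂μ = ∫ ω, v ω * (μ[Y|mZ]) ω ∂μ := by
  simp_rw [mul_comm (v _)]
  exact ortho' hmZ hY hvm hv

private lemma expand' (a b c d : Ω → ℝ)
    (hab : Integrable (fun ω => a ω * b ω) μ) (had : Integrable (fun ω => a ω * d ω) μ)
    (hcb : Integrable (fun ω => c ω * b ω) μ) (hcd : Integrable (fun ω => c ω * d ω) μ) :
    ∫ ω, (a ω - c ω) * (b ω - d ω) ∂μ
      = ((∫ ω, a ω * b ω ∂μ) - ∫ ω, a ω * d ω ∂μ)
        - ((∫ ω, c ω * b ω ∂μ) - ∫ ω, c ω * d ω ∂μ) := by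
  have h : ∀ ω, (a ω - c ω) * (b ω - d ω)
      = (a ω * b ω - a ω * d ω) - (c ω * b ω - c ω * d ω) := fun ω => by ring
  simp_rw [h]
  have h1 : Integrable (fun ω => a ω * b ω - a ω * d ω) μ := hab.sub had
  have h2 : Integrable (fun ω => c ω * b ω - c ω * d ω) μ := hcb.sub hcd
  rw [integral_sub h1 h2, integral_sub hab had, integral_sub hcb hcd]

end Aux

/-- Bias decomposition
E[(Y-ĥ)(X-f̂)] - E[Cov(Y,X|Z)] = E[(E[Y|Z]-ĥ)(E[X|Z]-f̂)], and the bias is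
bounded by the product of the L2 errors (Cauchy–Schwarz). -/
theorem stmt14
    {Ω : Type*} {mΩ : MeasurableSpace Ω} {μ : Measure Ω} [IsProbabilityMeasure μ]
    (mZ : MeasurableSpace Ω) (hmZ : mZ ≤ mΩ)
    (Y X hhat fhat : Ω → ℝ)
    (hY : MemLp Y 2 μ) (hX : MemLp X 2 μ)
    (hhm : StronglyMeasurable[mZ] hhat) (hfm : StronglyMeasurable[mZ] fhat)
    (hh2 : MemLp hhat 2 μ) (hf2 : MemLp fhat 2 μ) :
    ∫ ω, (Y ω - hhat ω) * (X ω - fhat ω) ∂μ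
        - ∫ ω, (Y ω - (μ[Y|mZ]) ω) * (X ω - (μ[X|mZ]) ω) ∂μ
      = ∫ ω, ((μ[Y|mZ]) ω - hhat ω) * ((μ[X|mZ]) ω - fhat ω) ∂μ
    ∧ |∫ ω, ((μ[Y|mZ]) ω - hhat ω) * ((μ[X|mZ]) ω - fhat ω) ∂μ|
      ≤ Real.sqrt (∫ ω, ((μ[Y|mZ]) ω - hhat ω) ^ 2 ∂μ)
        * Real.sqrt (∫ ω, ((μ[X|mZ]) ω - fhat ω) ^ 2 ∂μ) := by
  set g := μ[Y|mZ] with hg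
  set k := μ[X|mZ] with hk
  have hg2 : MemLp g 2 μ := memLp_condexp_two' hmZ hY
  have hk2 : MemLp k 2 μ := memLp_condexp_two' hmZ hX
  have hgm : StronglyMeasurable[mZ] g := stronglyMeasurable_condExp
  have hkm : StronglyMeasurable[mZ] k := stronglyMeasurable_condExp
  constructor
  · -- decomposition
    rw [expand' Y X hhat fhat (int_mul' _ _ hY hX) (int_mul' _ _ hY hf2)
        (int_mul' _ _ hh2 hX) (int_mul' _ _ hh2 hf2),
      expand' Y X g k (int_mul' _ _ hY hX) (int_mul' _ _ hY hk2)
        (int_mul' _ _ hg2 hX) (int_mul' _ _ hg2 hk2),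
      expand' g k hhat fhat (int_mul' _ _ hg2 hk2) (int_mul' _ _ hg2 hf2)
        (int_mul' _ _ hh2 hk2) (int_mul' _ _ hh2 hf2)]
    rw [ortho' hmZ hY hfm hf2, ortho' hmZ hY hkm hk2, ortho2' hmZ hX hhm hh2,
      ortho2' hmZ hX hgm hg2, ← hg, ← hk]
    ring
  · -- Cauchy–Schwarz
    set u : Ω → ℝ := fun ω => g ω - hhat ω with hu
    set w : Ω → ℝ := fun ω => k ω - fhat ω with hw
    have hu2 : MemLp u 2 μ := hg2.sub hh2
    have hw2 : MemLp w 2 μ := hk2.sub hf2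
    have huw : Integrable (fun ω => u ω * w ω) μ := int_mul' u w hu2 hw2
    have h1 : |∫ ω, u ω * w ω ∂μ| ≤ ∫ ω, |u ω| * |w ω| ∂μ := by
      simpa [Real.norm_eq_abs, abs_mul] using
        norm_integral_le_integral_norm (μ := μ) (fun ω => u ω * w ω)
    have hconj : (2:ℝ).HolderConjugate 2 := Real.HolderConjugate.two_two
    have h2 : ∫ ω, |u ω| * |w ω| ∂μ
        ≤ (∫ ω, |u ω| ^ (2:ℝ) ∂μ) ^ ((1:ℝ)/2) * (∫ ω, |w ω| ^ (2:ℝ) ∂μ) ^ ((1:ℝ)/2) := by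
      refine integral_mul_le_Lp_mul_Lq_of_nonneg hconj
        (Filter.Eventually.of_forall fun ω => abs_nonneg _)
        (Filter.Eventually.of_forall fun ω => abs_nonneg _) ?_ ?_
      · have := hu2.abs; simp only [ENNReal.ofReal_ofNat]; exact this
      · have := hw2.abs; simp only [ENNReal.ofReal_ofNat]; exact this
    have hcast : ∀ (f : Ω → ℝ), (∫ ω, |f ω| ^ (2:ℝ) ∂μ) ^ ((1:ℝ)/2)
        = Real.sqrt (∫ ω, f ω ^ 2 ∂μ) := by
      intro f
      rw [Real.sqrt_eq_rpow]
      congr 1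
      refine integral_congr_ae (Filter.Eventually.of_forall fun ω => ?_)
      show |f ω| ^ (2:ℝ) = f ω ^ 2
      rw [show (2:ℝ) = ((2:ℕ):ℝ) by norm_num, Real.rpow_natCast, sq_abs]
    calc |∫ ω, u ω * w ω ∂μ| ≤ ∫ ω, |u ω| * |w ω| ∂μ := h1
      _ ≤ (∫ ω, |u ω| ^ (2:ℝ) ∂μ) ^ ((1:ℝ)/2) * (∫ ω, |w ω| ^ (2:ℝ) ∂μ) ^ ((1:ℝ)/2) := h2
      _ = Real.sqrt (∫ ω, u ω ^ 2 ∂μ) * Real.sqrt (∫ ω, w ω ^ 2 ∂μ) := by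
          rw [hcast u, hcast w]
end
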